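/- Let R be a semilocal ring and I a right ideal of R. Then every homomorphism from any right ideal of R to I extends to an endomorphism of R_R if and only if every homomorphism from any small right ideal of R to I extends to an endomorphism of R_R. -/

import Mathlib

/-- A right ideal `I` of `R` (viewed as a submodule of `R` over `Rᵐᵒᵖ`) is small if
`I + K ≠ R` for every proper right ideal `K`. -/
def IsSmallRightIdeal {R : Type*} [Ring R] (I : Submodule Rᵐᵒᵖ R) : Prop :=
  ∀ K : Submodule Rᵐᵒᵖ R, I ⊔ K = ⊤ → K = ⊤

/-- A right `R`-module `M` is small injective if every `R`-homomorphism from a small right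
ideal of `R` to `M` extends to a homomorphism `R → M`. -/
def SmallInjective (R : Type*) [Ring R] (M : Type*) [AddCommGroup M] [Module Rᵐᵒᵖ M] : Prop :=
  ∀ I : Submodule Rᵐᵒᵖ R, IsSmallRightIdeal I → ∀ f : I →ₗ[Rᵐᵒᵖ] M,
    ∃ g : R →ₗ[Rᵐᵒᵖ] M, ∀ x : I, g x = f x

section Aux

variable {R : Type*} [Ring R]

private lemma jac_mul_right {x : R} (hx : x ∈ (⊥ : Ideal R).jacobson) (y : R) :
    x * y ∈ (⊥ : Ideal R).jacobson :=
  Ideal.mul_mem_right y _ hx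

private lemma jac_unit {t : R} (ht : t ∈ (⊥ : Ideal R).jacobson) :
    ∃ z, (1 - t) * z = 1 ∧ z * (1 - t) = 1 := by
  have key : ∀ s : R, s ∈ (⊥ : Ideal R).jacobson → ∃ z, z * (1 - s) = 1 := by
    intro s hs
    obtain ⟨z, hz⟩ := Ideal.mem_jacobson_iff.mp hs (-1)
    rw [Ideal.mem_bot] at hz
    refine ⟨z, ?_⟩
    have h2 : z * (-1) * s + z - 1 = z * (1 - s) - 1 := by noncomm_ring
    rw [h2] at hz
    exact sub_eq_zero.mp hz
  obtain ⟨z, hz⟩ := key t ht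
  have hz' : z = 1 - (-(z * t)) := by
    have h3 : z * (1 - t) = z - z * t := by noncomm_ring
    rw [h3] at hz
    rw [sub_neg_eq_add, ← hz]
    abel
  obtain ⟨w, hw⟩ := key (-(z * t)) (Submodule.neg_mem _ (Ideal.mul_mem_left _ z ht))
  rw [← hz'] at hw
  have hwz : w = 1 - t := by
    calc w = w * (z * (1 - t)) := by rw [hz, mul_one]
    _ = (w * z) * (1 - t) := by rw [mul_assoc]
    _ = 1 - t := by rw [hw, one_mul]
  exact ⟨z, by rw [← hwz]; exact hw, hz⟩

private lemma small_of_le_jac (T : Submodule Rᵐᵒᵖ R)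
    (hT : ∀ x ∈ T, x ∈ (⊥ : Ideal R).jacobson) : IsSmallRightIdeal T := by
  intro M hM
  have h1 : (1 : R) ∈ T ⊔ M := by rw [hM]; trivial
  obtain ⟨t, htT, m, hmM, htm⟩ := Submodule.mem_sup.mp h1
  obtain ⟨z, hz, -⟩ := jac_unit (hT t htT)
  have hm : m = 1 - t := eq_sub_of_add_eq' htm
  have h1M : (1 : R) ∈ M := by
    have := M.smul_mem (MulOpposite.op z) hmM
    rwa [MulOpposite.smul_eq_mul_unop, MulOpposite.unop_op, hm, hz] at this
  rw [Submodule.eq_top_iff']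
  intro x
  have := M.smul_mem (MulOpposite.op x) h1M
  rwa [MulOpposite.smul_eq_mul_unop, MulOpposite.unop_op, one_mul] at this

private lemma vnr_mod_jac (hsl : IsSemisimpleModule R (R ⧸ (⊥ : Ideal R).jacobson))
    (a : R) : ∃ x, a - a * x * a ∈ (⊥ : Ideal R).jacobson := by
  haveI := hsl
  set π : R →ₗ[R] R ⧸ (⊥ : Ideal R).jacobson := ((⊥ : Ideal R).jacobson).mkQ with hπ
  obtain ⟨C, hC⟩ := exists_isCompl (Submodule.span R {π a})
  have h1 : π 1 ∈ Submodule.span R {π a} ⊔ C := by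
    rw [codisjoint_iff.mp hC.codisjoint]; trivial
  obtain ⟨u, hu, c, hc, huc⟩ := Submodule.mem_sup.mp h1
  obtain ⟨x, hx⟩ := Submodule.mem_span_singleton.mp hu
  refine ⟨x, ?_⟩
  have key : π (a - a * x * a) ∈ Submodule.span R {π a} ⊓ C := by
    constructor
    · have heq : π (a - a * x * a) = π a - (a * x) • π a := by
        rw [← LinearMap.map_smul, smul_eq_mul, ← map_sub]
      rw [heq]
      exact Submodule.sub_mem _ (Submodule.mem_span_singleton_self _)
        (Submodule.smul_mem _ _ (Submodule.mem_span_singleton_self _))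
    · have hxa : (x : R) • π a = π (x * a) := by
        rw [← LinearMap.map_smul, smul_eq_mul]
      have hcval : c = π (1 - x * a) := by
        have hc1 : c = π 1 - u := eq_sub_of_add_eq' huc
        rw [hc1, ← hx, hxa, ← map_sub]
      have heq2 : π (a - a * x * a) = a • c := by
        rw [hcval, ← LinearMap.map_smul, smul_eq_mul]
        congr 1
        noncomm_ring
      rw [heq2]
      exact Submodule.smul_mem _ _ hc
  rw [disjoint_iff.mp hC.disjoint, Submodule.mem_bot] at key
  have hker := LinearMap.mem_ker.mpr key
  rwa [hπ, Submodule.ker_mkQ] at hker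

/-- right multiplication annihilator mod J, as a left ideal -/
private def annJ (e : R) : Ideal R where
  carrier := {x | x * e ∈ (⊥ : Ideal R).jacobson}
  add_mem' := fun {a b} ha hb => by
    simp only [Set.mem_setOf_eq, add_mul] at *
    exact Submodule.add_mem _ ha hb
  zero_mem' := by simp only [Set.mem_setOf_eq, zero_mul]; exact Submodule.zero_mem _
  smul_mem' := fun r x hx => by
    simp only [Set.mem_setOf_eq, smul_eq_mul, mul_assoc] at *
    exact Ideal.mul_mem_left _ r hx

private lemma mem_annJ {e x : R} : x ∈ annJ e ↔ x * e ∈ (⊥ : Ideal R).jacobson := Iff.rfl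

private lemma exists_left_unit_mod (hsl : IsSemisimpleModule R (R ⧸ (⊥ : Ideal R).jacobson))
    (K : Submodule Rᵐᵒᵖ R) :
    ∃ e, e ∈ K ∧ ∀ b ∈ K, b - e * b ∈ (⊥ : Ideal R).jacobson := by
  haveI := hsl
  haveI : IsArtinian R (R ⧸ (⊥ : Ideal R).jacobson) := inferInstance
  set S : Set (Submodule R (R ⧸ (⊥ : Ideal R).jacobson)) :=
    {E | ∃ e, e ∈ K ∧ e * e - e ∈ (⊥ : Ideal R).jacobson ∧
      E = Submodule.map ((⊥ : Ideal R).jacobson).mkQ (annJ e)} with hS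
  have hne : S.Nonempty :=
    ⟨_, 0, K.zero_mem, by rw [mul_zero, sub_zero]; exact Submodule.zero_mem _, rfl⟩
  obtain ⟨E₀, hE₀S, hmin⟩ := IsArtinian.set_has_minimal S hne
  obtain ⟨e, heK, he2, rfl⟩ := hE₀S
  refine ⟨e, heK, ?_⟩
  intro b hb
  by_contra hbe
  obtain ⟨y, hy⟩ := vnr_mod_jac hsl (b - e * b)
  set c := b - e * b with hc
  set f := c * y with hf
  set g := e + f - f * e with hg
  -- membership in K
  have hebK : e * b ∈ K := by
    have := K.smul_mem (MulOpposite.op b) heK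
    rwa [MulOpposite.smul_eq_mul_unop, MulOpposite.unop_op] at this
  have hcK : c ∈ K := K.sub_mem hb hebK
  have hfK : f ∈ K := by
    have := K.smul_mem (MulOpposite.op y) hcK
    rwa [MulOpposite.smul_eq_mul_unop, MulOpposite.unop_op] at this
  have hfeK : f * e ∈ K := by
    have := K.smul_mem (MulOpposite.op e) hfK
    rwa [MulOpposite.smul_eq_mul_unop, MulOpposite.unop_op] at this
  have hgK : g ∈ K := K.sub_mem (K.add_mem heK hfK) hfeK
  -- basic J memberships
  have hec : e * c ∈ (⊥ : Ideal R).jacobson := by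
    have h1 : (e * e - e) * b ∈ (⊥ : Ideal R).jacobson := jac_mul_right he2 b
    have heq : e * c = -((e * e - e) * b) := by rw [hc]; noncomm_ring
    rw [heq]; exact Submodule.neg_mem _ h1
  have hef : e * f ∈ (⊥ : Ideal R).jacobson := by
    have := jac_mul_right hec y
    rwa [mul_assoc] at this
  have hfcc : f * c - c ∈ (⊥ : Ideal R).jacobson := by
    have := Submodule.neg_mem _ hy
    rwa [neg_sub] at this
  have hfff : f * f - f ∈ (⊥ : Ideal R).jacobson := by
    have h1 := jac_mul_right hfcc y
    have heq : f * f - f = (f * c - c) * y := by rw [hf]; noncomm_ring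
    rwa [← heq] at h1
  have hge : g * e - e ∈ (⊥ : Ideal R).jacobson := by
    have h1 : f * (e * e - e) ∈ (⊥ : Ideal R).jacobson := Ideal.mul_mem_left _ f he2
    have heq : g * e - e = (e * e - e) - f * (e * e - e) := by rw [hg]; noncomm_ring
    rw [heq]; exact Submodule.sub_mem _ he2 h1
  have hgf : g * f - f ∈ (⊥ : Ideal R).jacobson := by
    have h1 : f * (e * f) ∈ (⊥ : Ideal R).jacobson := Ideal.mul_mem_left _ f hef
    have heq : g * f - f = e * f + (f * f - f) - f * (e * f) := by rw [hg]; noncomm_ring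
    rw [heq]
    exact Submodule.sub_mem _ (Submodule.add_mem _ hef hfff) h1
  have hg2 : g * g - g ∈ (⊥ : Ideal R).jacobson := by
    have heq : g * g - g = (g * e - e) + (g * f - f) - (g * f - f) * e := by
      rw [hg]; noncomm_ring
    rw [heq]
    exact Submodule.sub_mem _ (Submodule.add_mem _ hge hgf) (jac_mul_right hgf e)
  -- annJ g ≤ annJ e
  have hle : annJ g ≤ annJ e := by
    intro x hx
    rw [mem_annJ] at hx ⊢
    have h1 : x * g * e ∈ (⊥ : Ideal R).jacobson := jac_mul_right hx e
    have h2 : x * (g * e - e) ∈ (⊥ : Ideal R).jacobson := Ideal.mul_mem_left _ x hge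
    have heq : x * e = x * g * e - x * (g * e - e) := by noncomm_ring
    rw [heq]; exact Submodule.sub_mem _ h1 h2
  -- 1 - e ∈ annJ e
  have hmem : (1 - e) ∈ annJ e := by
    rw [mem_annJ]
    have heq : (1 - e) * e = -(e * e - e) := by noncomm_ring
    rw [heq]; exact Submodule.neg_mem _ he2
  -- 1 - e ∉ annJ g
  have hnotmem : (1 - e) ∉ annJ g := by
    intro hcon
    rw [mem_annJ] at hcon
    have heg : e * g - e ∈ (⊥ : Ideal R).jacobson := by
      have heq : e * g - e = (e * e - e) + e * f - (e * f) * e := by rw [hg]; noncomm_ring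
      rw [heq]
      exact Submodule.sub_mem _ (Submodule.add_mem _ he2 hef) (jac_mul_right hef e)
    have hgesub : g - e ∈ (⊥ : Ideal R).jacobson := by
      have heq : g - e = (1 - e) * g + (e * g - e) := by noncomm_ring
      rw [heq]; exact Submodule.add_mem _ hcon heg
    have hgc : g * c - c ∈ (⊥ : Ideal R).jacobson := by
      have h1 : f * (e * c) ∈ (⊥ : Ideal R).jacobson := Ideal.mul_mem_left _ f hec
      have heq : g * c - c = e * c + (f * c - c) - f * (e * c) := by rw [hg]; noncomm_ring
      rw [heq]
      exact Submodule.sub_mem _ (Submodule.add_mem _ hec hfcc) h1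
    have hgb : g * b - b ∈ (⊥ : Ideal R).jacobson := by
      have h1 : (g * e - e) * b ∈ (⊥ : Ideal R).jacobson := jac_mul_right hge b
      have heq : g * b - b = (g * c - c) + (g * e - e) * b := by rw [hc]; noncomm_ring
      rw [heq]; exact Submodule.add_mem _ hgc h1
    apply hbe
    have h1 : (g - e) * b ∈ (⊥ : Ideal R).jacobson := jac_mul_right hgesub b
    have heq : b - e * b = -(g * b - b) + (g - e) * b := by noncomm_ring
    rw [hc, heq]
    exact Submodule.add_mem _ (Submodule.neg_mem _ hgb) h1
  -- strict inequality and contradiction with minimality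
  have hJle : (⊥ : Ideal R).jacobson ≤ annJ g := fun j hj => by
    rw [mem_annJ]; exact jac_mul_right hj g
  have hlt : Submodule.map ((⊥ : Ideal R).jacobson).mkQ (annJ g) <
      Submodule.map ((⊥ : Ideal R).jacobson).mkQ (annJ e) := by
    refine lt_of_le_of_ne (Submodule.map_mono hle) (fun heq => ?_)
    have h1 : ((⊥ : Ideal R).jacobson).mkQ (1 - e) ∈
        Submodule.map ((⊥ : Ideal R).jacobson).mkQ (annJ e) :=
      Submodule.mem_map_of_mem hmem
    rw [← heq] at h1
    obtain ⟨x, hxg, hxe⟩ := h1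
    have hsub : x - (1 - e) ∈ (⊥ : Ideal R).jacobson := by
      rw [← Submodule.Quotient.eq]
      exact hxe
    apply hnotmem
    have hxeq : (1 - e) = x - (x - (1 - e)) := by abel
    rw [hxeq]
    exact Submodule.sub_mem _ hxg (hJle hsub)
  exact hmin _ ⟨g, hgK, hg2, rfl⟩ hlt

private lemma exists_complement (hsl : IsSemisimpleModule R (R ⧸ (⊥ : Ideal R).jacobson))
    (K : Submodule Rᵐᵒᵖ R) :
    ∃ L : Submodule Rᵐᵒᵖ R, K ⊔ L = ⊤ ∧ ∀ x ∈ K ⊓ L, x ∈ (⊥ : Ideal R).jacobson := by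
  obtain ⟨e, heK, he⟩ := exists_left_unit_mod hsl K
  have he2 : e * e - e ∈ (⊥ : Ideal R).jacobson := by
    have := he e heK
    have heq : e * e - e = -(e - e * e) := by noncomm_ring
    rw [heq]; exact Submodule.neg_mem _ this
  refine ⟨{ carrier := {x | e * x ∈ (⊥ : Ideal R).jacobson}
            add_mem' := fun {a b} ha hb => by
              simp only [Set.mem_setOf_eq, mul_add] at *
              exact Submodule.add_mem _ ha hb
            zero_mem' := by
              simp only [Set.mem_setOf_eq, mul_zero]; exact Submodule.zero_mem _
            smul_mem' := fun r x hx => by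
              simp only [Set.mem_setOf_eq, MulOpposite.smul_eq_mul_unop] at *
              rw [← mul_assoc]
              exact jac_mul_right hx _ }, ?_, ?_⟩
  · rw [Submodule.eq_top_iff']
    intro r
    apply Submodule.mem_sup.mpr
    refine ⟨e * r, ?_, r - e * r, ?_, by abel⟩
    · have := K.smul_mem (MulOpposite.op r) heK
      rwa [MulOpposite.smul_eq_mul_unop, MulOpposite.unop_op] at this
    · show e * (r - e * r) ∈ (⊥ : Ideal R).jacobson
      have heq : e * (r - e * r) = -((e * e - e) * r) := by noncomm_ring
      rw [heq]
      exact Submodule.neg_mem _ (jac_mul_right he2 r)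
  · intro x hx
    obtain ⟨hxK, hxL⟩ := hx
    have h1 : x - e * x ∈ (⊥ : Ideal R).jacobson := he x hxK
    have h2 : e * x ∈ (⊥ : Ideal R).jacobson := hxL
    have : x = (x - e * x) + e * x := by abel
    rw [this]
    exact Submodule.add_mem _ h1 h2

end Aux

/-- Let `R` be semilocal (`R/J(R)` is a semisimple) and `I` a right ideal of `R`. Then every
homomorphism from any right ideal to `I` extends to an endomorphism of `R` as a right module
iff every homomorphism from any small right ideal to `I` so extends. -/
theorem stmt_12 {R : Type*} [Ring R]
    (hsl : IsSemisimpleModule R (R ⧸ (⊥ : Ideal R).jacobson))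
    (I : Submodule Rᵐᵒᵖ R) :
    (∀ (K : Submodule Rᵐᵒᵖ R) (f : K →ₗ[Rᵐᵒᵖ] R), (∀ x : K, f x ∈ I) →
        ∃ g : R →ₗ[Rᵐᵒᵖ] R, ∀ x : K, g x = f x) ↔
    (∀ (K : Submodule Rᵐᵒᵖ R), IsSmallRightIdeal K → ∀ f : K →ₗ[Rᵐᵒᵖ] R,
        (∀ x : K, f x ∈ I) → ∃ g : R →ₗ[Rᵐᵒᵖ] R, ∀ x : K, g x = f x) := by
  constructor
  · intro h K _ f hf
    exact h K f hf
  · intro h K f hf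
    obtain ⟨L, hKL, hinf⟩ := exists_complement hsl K
    have hsmall : IsSmallRightIdeal (K ⊓ L) := small_of_le_jac _ hinf
    let fT : ↥(K ⊓ L) →ₗ[Rᵐᵒᵖ] R := f.comp (Submodule.inclusion inf_le_left)
    have hfT : ∀ x : ↥(K ⊓ L), fT x ∈ I := fun x => hf _
    obtain ⟨g, hg⟩ := h (K ⊓ L) hsmall fT hfT
    let f' : ↥K →ₗ[Rᵐᵒᵖ] R := f - g.comp K.subtype
    have hker : Submodule.comap K.subtype (K ⊓ L) ≤ LinearMap.ker f' := by
      intro k hk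
      rw [Submodule.mem_comap] at hk
      have h1 := hg ⟨(k : R), hk⟩
      have h2 : fT ⟨(k : R), hk⟩ = f k := by
        show f (Submodule.inclusion inf_le_left ⟨(k : R), hk⟩) = f k
        congr 1
      rw [LinearMap.mem_ker]
      show f k - g (K.subtype k) = 0
      rw [Submodule.coe_subtype, h1, h2, sub_self]
    let fbar := Submodule.liftQ _ f' hker
    let e2 := LinearMap.quotientInfEquivSupQuotient K L
    let u : R →ₗ[Rᵐᵒᵖ] ↥(K ⊔ L) :=
      LinearMap.codRestrict _ LinearMap.id (fun x => by rw [hKL]; trivial)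
    let H : R →ₗ[Rᵐᵒᵖ] R :=
      fbar ∘ₗ e2.symm.toLinearMap ∘ₗ (Submodule.comap (K ⊔ L).subtype L).mkQ ∘ₗ u
    refine ⟨g + H, fun k => ?_⟩
    have h1 : (Submodule.comap (K ⊔ L).subtype L).mkQ (u (k : R)) =
        e2 (Submodule.Quotient.mk k) := rfl
    have h2 : H (k : R) = f' k := by
      show fbar (e2.symm ((Submodule.comap (K ⊔ L).subtype L).mkQ (u (k : R)))) = f' k
      rw [h1, LinearEquiv.symm_apply_apply]; rfl
    have h3 : (g + H) (k : R) = g (k : R) + f' k := by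
      rw [LinearMap.add_apply, h2]
    rw [h3]
    show g (k : R) + (f k - g (K.subtype k)) = f k
    rw [Submodule.coe_subtype]
    abel
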